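/- Let W be a string, a a character, and suppose aW has a nonempty longest border V (bord(aW) > 0). Then for every character c, if c|aW > 0 and c|aW < bord(aW), then c|aW = c|V. That is, the function mapping characters to their longest-border-preceded-by lengths for aW agrees with that of V except possibly at the single character d preceding the suffix occurrence of V in aW, where d|aW = bord(aW). -/

import Mathlib

open List

variable {α : Type*} [DecidableEq α]

/-- Set of starting positions of occurrences of `W` in `T`. -/
def occSet (T W : List α) : Finset ℕ :=
  (Finset.range (T.length + 1)).filter (fun i => (T.drop i).take W.length = W)

/-- Number of occurrences of `W` in `T`. -/
def fT (T W : List α) : ℕ := (occSet T W).card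

/-- Number of occurrences of `W` in the circular version of `T`. -/
def fC (T W : List α) : ℕ :=
  ((Finset.range T.length).filter (fun i => ((T ++ T).drop i).take W.length = W)).card

/-- Lengths of proper borders of `W`. -/
def borders (W : List α) : Finset ℕ :=
  (Finset.Ioo 0 W.length).filter (fun b => W.take b <:+ W)

/-- Length of the longest proper border of `W` (0 if none). -/
def bord (W : List α) : ℕ := (borders W).sup id

/-- `a|W`: length of the longest proper border of `W` preceded by `a`
when it occurs as a suffix of `W` (0 if none). -/
def bordPre (a : α) (W : List α) : ℕ :=
  ((borders W).filter (fun b => W[W.length - b - 1]? = some a)).sup id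

/-- `W|b`: length of the longest proper border of `W` followed by `b`
when it occurs as a prefix of `W` (0 if none). -/
def bordFol (b : α) (W : List α) : ℕ :=
  ((borders W).filter (fun p => W[p]? = some b)).sup id

/-- `V` is a nonempty proper border of `W`. -/
def IsProperBorder (V W : List α) : Prop :=
  V ≠ [] ∧ V.length < W.length ∧ V <+: W ∧ V <:+ W

/-- `W` is right-maximal in `T`. -/
def IsRightMax (T W : List α) : Prop :=
  ∃ b c : α, b ≠ c ∧ (W ++ [b]) <:+: T ∧ (W ++ [c]) <:+: T

/-- `W` is left-maximal in `T`. -/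
def IsLeftMax (T W : List α) : Prop :=
  ∃ b c : α, b ≠ c ∧ (b :: W) <:+: T ∧ (c :: W) <:+: T

/-- `W` is a maximal repeat of `T`. -/
def IsMaxRepeat (T W : List α) : Prop :=
  1 < fT T W ∧ IsLeftMax T W ∧ IsRightMax T W

lemma suffix_of_suffix_length_le' {l₁ l₂ l₃ : List α} (h1 : l₁ <:+ l₃) (h2 : l₂ <:+ l₃)
    (h : l₁.length ≤ l₂.length) : l₁ <:+ l₂ := by
  rw [← List.reverse_prefix] at h1 h2 ⊢
  exact List.prefix_of_prefix_length_le h1 h2 (by simpa using h)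

lemma sup_mem_of_pos {s : Finset ℕ} (h : 0 < s.sup id) : s.sup id ∈ s := by
  rcases s.eq_empty_or_nonempty with rfl | hs
  · simp at h
  · obtain ⟨i, hi, he⟩ := Finset.exists_mem_eq_sup s hs id
    rw [he]; exact hi

lemma mem_borders_iff {W : List α} {b : ℕ} :
    b ∈ borders W ↔ 0 < b ∧ b < W.length ∧ W.take b <:+ W := by
  simp [borders, Finset.mem_filter, Finset.mem_Ioo, and_assoc]

/-- for the longest border V of aW, the function c ↦ c|aW agrees
with c ↦ c|V for every character c whose value c|aW is positive and strictly
smaller than bord(aW). -/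
theorem bordPre_recursion (W : List α) (a : α) (h : 0 < bord (a :: W)) :
    ∀ c : α, 0 < bordPre c (a :: W) → bordPre c (a :: W) < bord (a :: W) →
      bordPre c (a :: W) = bordPre c ((a :: W).take (bord (a :: W))) := by
  intro c hc hlt
  set X := a :: W with hX
  set B := bord X with hBdef
  set V := X.take B with hV
  -- B is a border of X
  have hBmem : B ∈ borders X := sup_mem_of_pos h
  obtain ⟨hB0, hBn, hBsuf⟩ := mem_borders_iff.mp hBmem
  have hVlen : V.length = B := by
    simp [hV, Nat.min_eq_left (le_of_lt hBn)]
  have hVsuf : V <:+ X := hBsuf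
  -- character correspondence
  have hchar : ∀ b : ℕ, b < B →
      V[V.length - b - 1]? = X[X.length - b - 1]? := by
    intro b hb
    obtain ⟨U, hU⟩ := hVsuf
    have hUlen : U.length = X.length - B := by
      have := congrArg List.length hU
      simp at this; omega
    have hlen : X.length = U.length + V.length := by
      have := congrArg List.length hU; simp only [List.length_append] at this; omega
    conv_rhs => rw [← hU]
    rw [List.getElem?_append_right (by simp only [List.length_append]; omega)]
    congr 1
    simp only [List.length_append]
    omega
  -- borders correspondence
  have hbord : ∀ b : ℕ, b ∈ borders V ↔ b ∈ borders X ∧ b < B := by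
    intro b
    constructor
    · intro hb
      obtain ⟨h0, h1, h2⟩ := mem_borders_iff.mp hb
      rw [hVlen] at h1
      have htake : V.take b = X.take b := by
        rw [hV, List.take_take, Nat.min_eq_left (le_of_lt h1)]
      refine ⟨mem_borders_iff.mpr ⟨h0, lt_trans h1 hBn, ?_⟩, h1⟩
      rw [← htake]; exact h2.trans hVsuf
    · rintro ⟨hb, hlt'⟩
      obtain ⟨h0, h1, h2⟩ := mem_borders_iff.mp hb
      have htake : V.take b = X.take b := by
        rw [hV, List.take_take, Nat.min_eq_left (le_of_lt hlt')]
      refine mem_borders_iff.mpr ⟨h0, by omega, ?_⟩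
      rw [htake]
      refine suffix_of_suffix_length_le' h2 hVsuf ?_
      rw [hVlen, List.length_take]; omega
  -- now compare the two sups
  unfold bordPre at *
  apply Nat.le_antisymm
  · set m := ((borders X).filter (fun b => X[X.length - b - 1]? = some c)).sup id with hm
    have hmmem : m ∈ (borders X).filter (fun b => X[X.length - b - 1]? = some c) :=
      sup_mem_of_pos hc
    rw [Finset.mem_filter] at hmmem
    have hmB : m < B := hlt
    have h2 : V[V.length - m - 1]? = some c := by
      rw [hchar m hmB]; exact hmmem.2
    exact Finset.le_sup (f := id) (Finset.mem_filter.mpr ⟨(hbord m).mpr ⟨hmmem.1, hmB⟩, h2⟩)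
  · apply Finset.sup_le
    intro b hb
    rw [Finset.mem_filter] at hb
    obtain ⟨hb1, hb2⟩ := hb
    have hbB : b < B := ((hbord b).mp hb1).2
    have h2 : X[X.length - b - 1]? = some c := by
      rw [← hchar b hbB]; exact hb2
    exact Finset.le_sup (f := id) (Finset.mem_filter.mpr ⟨((hbord b).mp hb1).1, h2⟩)
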